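/- If {F_n} is a sequence of continuous M-contraction operators from a Banach space X into a normed space Y converging pointwise to F : X → Y, and there is L > 0 with ||F_n(x₁+x₂)||_Y ≤ L·||F_n(x₁)+F_n(x₂)||_Y for all n and x₁, x₂ ∈ X, then {F_n} is uniformly norm bounded and F ∈ B(X,Y). -/

import Mathlib

open scoped ENNReal NNReal

/-- The (possibly infinite) norm `p(F) = max(sup_{x ≠ 0} ‖F x‖ / ‖x‖, ‖F 0‖)` on maps. -/
noncomputable def pm {X Y : Type*} [NormedAddCommGroup X] [NormedAddCommGroup Y]
    (F : X → Y) : ℝ≥0∞ :=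
  max (⨆ x : {x : X // x ≠ 0}, (‖F x.1‖₊ : ℝ≥0∞) / (‖x.1‖₊ : ℝ≥0∞)) (‖F 0‖₊ : ℝ≥0∞)

/-- If continuous `M`-contraction operators `Fₙ` from a Banach space converge pointwise to
`G` and satisfy the `L`-subadditivity condition, then `{Fₙ}` is uniformly norm bounded and
`G ∈ B(X,Y)`. -/
lemma pm_le_of_bounds {X Y : Type*} [NormedAddCommGroup X] [NormedAddCommGroup Y]
    (F : X → Y) (C a : ℝ) (h0 : ‖F 0‖ ≤ a)
    (h : ∀ x : X, x ≠ 0 → ‖F x‖ ≤ C * ‖x‖) :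
    pm F ≤ ENNReal.ofReal (max C a) := by
  have ha : 0 ≤ a := (norm_nonneg _).trans h0
  have hmax : (0:ℝ) ≤ max C a := le_max_of_le_right ha
  apply max_le
  · apply iSup_le
    rintro ⟨x, hx⟩
    have hxn : (‖x‖₊ : ℝ≥0∞) ≠ 0 := by
      simpa using (nnnorm_ne_zero_iff.mpr hx)
    rw [ENNReal.div_le_iff_le_mul (Or.inl hxn) (Or.inl ENNReal.coe_ne_top)]
    rw [← (ofReal_norm _).trans (enorm_eq_nnnorm _), ← (ofReal_norm _).trans (enorm_eq_nnnorm _),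
      ← ENNReal.ofReal_mul hmax]
    exact ENNReal.ofReal_le_ofReal ((h x hx).trans
      (mul_le_mul_of_nonneg_right (le_max_left _ _) (norm_nonneg _)))
  · rw [← (ofReal_norm _).trans (enorm_eq_nnnorm _)]
    exact ENNReal.ofReal_le_ofReal (h0.trans (le_max_right _ _))

theorem stmt7 {𝕜 X Y : Type*} [RCLike 𝕜] [NormedAddCommGroup X] [NormedSpace 𝕜 X]
    [CompleteSpace X] [NormedAddCommGroup Y] [NormedSpace 𝕜 Y]
    (F : ℕ → X → Y) (G : X → Y) (M : ℝ) (hM : 0 < M)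
    (hcont : ∀ n, Continuous (F n))
    (hcontr : ∀ n, ∀ k : 𝕜, k ≠ 0 → ∀ x : X, x ≠ 0 → ‖F n (k • x)‖ ≤ M * ‖k‖ * ‖F n x‖)
    (hptconv : ∀ x : X, Filter.Tendsto (fun n => F n x) Filter.atTop (nhds (G x)))
    (L : ℝ) (hL : 0 < L)
    (hsub : ∀ n, ∀ x₁ x₂ : X, ‖F n (x₁ + x₂)‖ ≤ L * ‖F n x₁ + F n x₂‖) :
    ∃ c : ℝ≥0, (∀ n, pm (F n) ≤ (c : ℝ≥0∞)) ∧ pm G ≠ ⊤ := by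
  classical
  -- pointwise boundedness
  have hbdd : ∀ x : X, ∃ k : ℕ, ∀ n, ‖F n x‖ ≤ k := by
    intro x
    obtain ⟨b, hb⟩ := ((hptconv x).norm).bddAbove_range
    exact ⟨⌈b⌉₊, fun n => (hb (Set.mem_range_self n)).trans (Nat.le_ceil b)⟩
  set E : ℕ → Set X := fun k => ⋂ n, {x : X | ‖F n x‖ ≤ (k : ℝ)} with hE
  have hcl : ∀ k, IsClosed (E k) := fun k =>
    isClosed_iInter fun n => isClosed_le ((hcont n).norm) continuous_const
  have hunion : (⋃ k, E k) = Set.univ := by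
    ext x
    simp only [hE, Set.mem_iUnion, Set.mem_iInter, Set.mem_setOf_eq, Set.mem_univ, iff_true]
    exact hbdd x
  obtain ⟨k, x₀, hx₀⟩ := nonempty_interior_of_iUnion_of_closed hcl hunion
  obtain ⟨r, hr, hball⟩ := Metric.mem_nhds_iff.mp
    (mem_interior_iff_mem_nhds.mp hx₀)
  have hmem : ∀ x ∈ Metric.ball x₀ r, ∀ n, ‖F n x‖ ≤ (k : ℝ) := by
    intro x hx n
    exact Set.mem_iInter.mp (hball hx) n
  have hx₀k : ∀ n, ‖F n x₀‖ ≤ (k : ℝ) := hmem x₀ (Metric.mem_ball_self hr)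
  have hneg : ∀ n, ‖F n (-x₀)‖ ≤ max 1 M * k := by
    intro n
    by_cases h0 : x₀ = 0
    · subst h0
      simp only [neg_zero]
      calc ‖F n 0‖ ≤ (k : ℝ) := hx₀k n
        _ ≤ max 1 M * k := by nlinarith [le_max_left 1 M, Nat.cast_nonneg (α := ℝ) k]
    · have h := hcontr n (-1 : 𝕜) (by norm_num) x₀ h0
      rw [neg_one_smul, norm_neg, norm_one, mul_one] at h
      calc ‖F n (-x₀)‖ ≤ M * ‖F n x₀‖ := h
        _ ≤ M * k := mul_le_mul_of_nonneg_left (hx₀k n) hM.le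
        _ ≤ max 1 M * k := by
            have := le_max_right (1:ℝ) M
            nlinarith [Nat.cast_nonneg (α := ℝ) k]
  set A : ℝ := L * ((k : ℝ) + max 1 M * k) with hAdef
  have hA0 : 0 ≤ A := by
    have h1 : (0:ℝ) ≤ max 1 M := le_trans zero_le_one (le_max_left _ _)
    have h2 : (0:ℝ) ≤ (k:ℝ) := Nat.cast_nonneg k
    positivity
  have hballA : ∀ n, ∀ y : X, ‖y‖ ≤ r / 2 → ‖F n y‖ ≤ A := by
    intro n y hy
    have h1 : x₀ + y ∈ Metric.ball x₀ r := by
      rw [Metric.mem_ball, dist_eq_norm]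
      have : x₀ + y - x₀ = y := by abel
      rw [this]; linarith
    have heq : (x₀ + y) + (-x₀) = y := by abel
    calc ‖F n y‖ = ‖F n ((x₀ + y) + (-x₀))‖ := by rw [heq]
      _ ≤ L * ‖F n (x₀ + y) + F n (-x₀)‖ := hsub n _ _
      _ ≤ L * (‖F n (x₀ + y)‖ + ‖F n (-x₀)‖) :=
          mul_le_mul_of_nonneg_left (norm_add_le _ _) hL.le
      _ ≤ A := by
          rw [hAdef]
          have := hmem _ h1 n
          have := hneg n
          nlinarith
  set C : ℝ := M * (2 * A / r) with hCdef
  have hCx : ∀ n, ∀ x : X, x ≠ 0 → ‖F n x‖ ≤ C * ‖x‖ := by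
    intro n x hx
    have hnx : 0 < ‖x‖ := norm_pos_iff.mpr hx
    set t : ℝ := 2 * ‖x‖ / r with htdef
    have ht : 0 < t := by positivity
    have htk : ((t : 𝕜)) ≠ 0 := by
      simpa using ht.ne'
    set z : X := ((t : 𝕜))⁻¹ • x with hzdef
    have hz0 : z ≠ 0 := smul_ne_zero (inv_ne_zero htk) hx
    have hkz : (t : 𝕜) • z = x := by
      rw [hzdef, smul_inv_smul₀ htk]
    have hznorm : ‖z‖ = r / 2 := by
      rw [hzdef, norm_smul, norm_inv, RCLike.norm_ofReal, abs_of_pos ht, htdef]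
      field_simp
    have hFz : ‖F n z‖ ≤ A := hballA n z (le_of_eq hznorm)
    have h := hcontr n (t : 𝕜) htk z hz0
    rw [hkz, RCLike.norm_ofReal, abs_of_pos ht] at h
    have : M * t * ‖F n z‖ ≤ M * t * A :=
      mul_le_mul_of_nonneg_left hFz (by positivity)
    have hEq : M * t * A = C * ‖x‖ := by
      rw [hCdef, htdef]; field_simp
    linarith [h, this, hEq ▸ this]
  have h0A : ∀ n, ‖F n 0‖ ≤ A := fun n =>
    hballA n 0 (by simp; positivity)
  -- bounds for G by passing to the limit
  have hGx : ∀ x : X, x ≠ 0 → ‖G x‖ ≤ C * ‖x‖ := by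
    intro x hx
    exact le_of_tendsto ((hptconv x).norm)
      (Filter.Eventually.of_forall fun n => hCx n x hx)
  have hG0 : ‖G 0‖ ≤ A :=
    le_of_tendsto ((hptconv 0).norm) (Filter.Eventually.of_forall fun n => h0A n)
  refine ⟨(max C A).toNNReal, ?_, ?_⟩
  · intro n
    have := pm_le_of_bounds (F n) C A (h0A n) (hCx n)
    simpa [ENNReal.ofReal] using this
  · have := pm_le_of_bounds G C A hG0 hGx
    exact ne_top_of_le_ne_top ENNReal.ofReal_ne_top this
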